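/- For each i with 2 ≤ i ≤ m: if r > 0 then φ^r(a_i) = a_i · a_{i-1} · φ(a_{i-1}) ⋯ φ^{r-1}(a_{i-1}), and if r < 0 then φ^r(a_i) = a_i · φ^{-1}(a_{i-1})^{-1} · φ^{-2}(a_{i-1})^{-1} ⋯ φ^{r}(a_{i-1})^{-1}; furthermore, both of these expressions are freely reduced words. -/

import Mathlib

open FreeGroup SemidirectProduct

/-- Words on the letters `a₁^{±1}, …, a_m^{±1}` (`(i, true)` is `a_{i+1}`,
`(i, false)` is `a_{i+1}⁻¹`, with 0-based `Fin`-indexing of the generators). -/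
abbrev FWord (m : ℕ) := List (Fin m × Bool)

/-- A word is freely reduced. -/
def Reduced {m : ℕ} (w : FWord m) : Prop := FreeGroup.reduce w = w

/-- `φ` is the automorphism of `F = F(a₁, …, a_m)` with `φ(a₁) = a₁` and
`φ(aᵢ) = aᵢ aᵢ₋₁` for `2 ≤ i ≤ m`. -/
def IsHydraAut (m : ℕ) (φ : FreeGroup (Fin m) ≃* FreeGroup (Fin m)) : Prop :=
  ∀ i : Fin m, φ (FreeGroup.of i) =
    if i.val = 0 then FreeGroup.of i
    else FreeGroup.of i *
      FreeGroup.of (⟨i.val - 1, Nat.lt_of_le_of_lt (Nat.sub_le _ _) i.isLt⟩ : Fin m)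

/-- The free-by-cyclic group `H_m = F ⋊_φ ℤ`; here `s = inr (ofAdd 1)` and the defining
relation `s⁻¹ aᵢ s = φ(aᵢ)` holds.  The normal form `ũ s^p` is the element
`⟨ũ, Multiplicative.ofAdd p⟩`. -/
abbrev Hgrp (m : ℕ) (φ : FreeGroup (Fin m) ≃* FreeGroup (Fin m)) :=
  FreeGroup (Fin m) ⋊[zpowersHom (MulAut (FreeGroup (Fin m))) φ⁻¹] Multiplicative ℤ

/-- Letters of words over the generators of `H_m`: `some i` is `a_{i+1}`, `none` is `s`. -/
abbrev HWord (m : ℕ) := List (Option (Fin m) × Bool)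

def hLetter {m : ℕ} (φ : FreeGroup (Fin m) ≃* FreeGroup (Fin m)) (x : Option (Fin m) × Bool) :
    Hgrp m φ :=
  match x.1 with
  | some i => cond x.2 (SemidirectProduct.inl (FreeGroup.of i))
      (SemidirectProduct.inl (FreeGroup.of i))⁻¹
  | none => cond x.2 (SemidirectProduct.inr (Multiplicative.ofAdd (1:ℤ)))
      (SemidirectProduct.inr (Multiplicative.ofAdd (1:ℤ)))⁻¹

/-- The element of `H_m` represented by a word on `a₁^{±1}, …, a_m^{±1}, s^{±1}`. -/
def evalH {m : ℕ} (φ : FreeGroup (Fin m) ≃* FreeGroup (Fin m)) (w : HWord m) : Hgrp m φ :=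
  (w.map (hLetter φ)).prod

/-- Word length in `H_m` w.r.t. the generating set `{a₁, …, a_m, s}`. -/
noncomputable def lenH {m : ℕ} (φ : FreeGroup (Fin m) ≃* FreeGroup (Fin m)) (g : Hgrp m φ) : ℕ :=
  sInf {n | ∃ w : HWord m, evalH φ w = g ∧ w.length = n}

/-- Word length in `F` w.r.t. the generating set `{a₁, …, a_m}`. -/
noncomputable def lenF {m : ℕ} (g : FreeGroup (Fin m)) : ℕ :=
  sInf {n | ∃ w : FWord m, FreeGroup.mk w = g ∧ w.length = n}

/-- The rank of a word: the maximal `i` such that `aᵢ^{±1}` occurs in it (a letter with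
`Fin`-index `j` is `a_{j+1}`, so it contributes `j+1`); the empty word has rank `0`. -/
def wrank {m : ℕ} (w : FWord m) : ℕ := (w.map (fun x => x.1.val + 1)).foldr max 0

/-- The four types of rank-`i` pieces: `aᵢ u`, `u aᵢ⁻¹`, `aᵢ u aᵢ⁻¹`, `u`. -/
inductive PieceType | head | tail | both | plain
deriving DecidableEq

/-- `π` is a rank-`i` piece of the given type: `aᵢ u`, `u aᵢ⁻¹`, `aᵢ u aᵢ⁻¹` or `u`,
where `u` is a (possibly empty) word of rank at most `i - 1`.  Pieces of the first three
types have strict rank `i`. -/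
def IsPieceType {m : ℕ} (i : ℕ) (t : PieceType) (π : FWord m) : Prop :=
  match t with
  | .head => ∃ (x : Fin m × Bool) (u : FWord m),
      π = x :: u ∧ x.1.val + 1 = i ∧ x.2 = true ∧ wrank u < i
  | .tail => ∃ (x : Fin m × Bool) (u : FWord m),
      π = u ++ [x] ∧ x.1.val + 1 = i ∧ x.2 = false ∧ wrank u < i
  | .both => ∃ (j : Fin m) (u : FWord m),
      π = (j, true) :: (u ++ [(j, false)]) ∧ j.val + 1 = i ∧ wrank u < i
  | .plain => wrank π < i

def IsPiece {m : ℕ} (i : ℕ) (π : FWord m) : Prop := ∃ t, IsPieceType i t π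

/-- The rank-`i` piece decomposition of `w`: a decomposition into rank-`i` pieces
with the minimal possible number of pieces. -/
def IsPieceDecomp {m : ℕ} (i : ℕ) (w : FWord m) (L : List (FWord m)) : Prop :=
  L.flatten = w ∧ (∀ π ∈ L, IsPiece i π) ∧
    ∀ L' : List (FWord m), L'.flatten = w → (∀ π ∈ L', IsPiece i π) → L.length ≤ L'.length

/-- The number of pieces in the rank-`i` decomposition of `w`, for `i = wrank w`. -/
noncomputable def piecesCount {m : ℕ} (w : FWord m) : ℕ :=
  sInf {p | ∃ L : List (FWord m),
    L.flatten = w ∧ (∀ π ∈ L, IsPiece (wrank w) π) ∧ L.length = p}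

/-- The number of pieces of an element of the free group. -/
noncomputable def piecesCountF {m : ℕ} (g : FreeGroup (Fin m)) : ℕ :=
  piecesCount (FreeGroup.toWord g)


set_option maxHeartbeats 1000000
section ChainAux
set_option linter.unusedSectionVars false
variable {α : Type*} [DecidableEq α]

/-- adjacency relation for reduced words -/
def NoCan (x y : α × Bool) : Prop := ¬(x.1 = y.1 ∧ x.2 = !y.2)

lemma reduce_eq_self_of_chain' : ∀ {L : List (α × Bool)}, List.Chain' NoCan L → reduce L = L := by
  intro L h
  induction L with
  | nil => rfl
  | cons x L ih =>
    have hL := ih h.tail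
    rw [reduce.cons, hL]
    cases L with
    | nil => rfl
    | cons y t =>
      have hxy : NoCan x y := (List.isChain_cons_cons.mp h).1
      simp only [if_neg hxy]

lemma chain'_or_cancel : ∀ (L : List (α × Bool)),
    List.Chain' NoCan L ∨ ∃ (L₂ : List (α × Bool)) (x : α) (b : Bool) (L₃ : List (α × Bool)),
      L = L₂ ++ (x, b) :: (x, !b) :: L₃ := by
  intro L
  induction L with
  | nil => left; exact List.isChain_nil
  | cons a L ih =>
    rcases ih with h | ⟨L₂, x, b, L₃, rfl⟩
    · cases L with
      | nil => left; exact List.isChain_singleton _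
      | cons y t =>
        by_cases hR : NoCan a y
        · left; exact List.isChain_cons_cons.mpr ⟨hR, h⟩
        · right
          simp only [NoCan, not_not] at hR
          exact ⟨[], a.1, a.2, t, by
            obtain ⟨a1, a2⟩ := a; obtain ⟨y1, y2⟩ := y
            simp_all⟩
    · right; exact ⟨a :: L₂, x, b, L₃, rfl⟩

lemma chain'_of_reduce_eq {L : List (α × Bool)} (h : reduce L = L) : List.Chain' NoCan L := by
  rcases chain'_or_cancel L with h' | ⟨L₂, x, b, L₃, rfl⟩
  · exact h'
  · exact (reduce.not (p := List.Chain' NoCan (L₂ ++ (x, b) :: (x, !b) :: L₃)) h)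

lemma reduce_eq_self_iff_chain' {L : List (α × Bool)} :
    reduce L = L ↔ List.Chain' NoCan L :=
  ⟨chain'_of_reduce_eq, reduce_eq_self_of_chain'⟩

lemma mk_flatten : ∀ (L : List (List (α × Bool))), FreeGroup.mk L.flatten = (L.map FreeGroup.mk).prod := by
  intro L
  induction L with
  | nil => rfl
  | cons B L ih => simp [mul_mk, ih, ← FreeGroup.mul_mk]

lemma chain'_flatten_of (L : List (List (α × Bool)))
    (h1 : ∀ B ∈ L, List.Chain' NoCan B)
    (h2 : ∀ B ∈ L, ∀ B' ∈ L, ∀ x ∈ B.getLast?, ∀ y ∈ B'.head?, NoCan x y) :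
    List.Chain' NoCan L.flatten := by
  induction L with
  | nil => exact List.isChain_nil
  | cons B L ih =>
    rw [List.flatten_cons, List.Chain', List.isChain_append]
    refine ⟨h1 B (by simp), ih (fun B' hB' => h1 B' (by simp [hB']))
      (fun B1 h1' B2 h2' => h2 B1 (by simp [h1']) B2 (by simp [h2'])), ?_⟩
    intro x hx y hy
    -- y is head of flatten L; find the block
    have : ∃ B' ∈ L, y ∈ B'.head? := by
      clear ih h1 h2 hx
      induction L with
      | nil => simp at hy
      | cons C L ihL =>
        rw [List.flatten_cons] at hy
        cases C with
        | nil => simpa using ihL (by simpa using hy)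
        | cons c t =>
          refine ⟨c :: t, by simp, ?_⟩
          simpa using hy
    obtain ⟨B', hB', hyB'⟩ := this
    exact h2 B (by simp) B' (by simp [hB']) x hx y hyB'

end ChainAux

section
variable {m : ℕ} {φ : FreeGroup (Fin m) ≃* FreeGroup (Fin m)} (hφ : IsHydraAut m φ)
include hφ

lemma hydra_fix_zero (hj : 0 < m) (k : ℕ) : (φ^k) (FreeGroup.of (⟨0, hj⟩ : Fin m)) = FreeGroup.of ⟨0, hj⟩ := by
  induction k with
  | zero => simp
  | succ k ih =>
    rw [pow_succ, MulAut.mul_apply]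
    have h0 := hφ ⟨0, hj⟩
    simp only [Fin.mk_zero] at h0 ⊢
    simp at h0
    rw [h0, ih]

lemma hydra_step {j : ℕ} (hj : j < m) (hj0 : 0 < j) :
    φ (FreeGroup.of (⟨j, hj⟩ : Fin m)) =
      FreeGroup.of ⟨j, hj⟩ * FreeGroup.of (⟨j - 1, by omega⟩ : Fin m) := by
  have h := hφ ⟨j, hj⟩
  rw [if_neg (by simpa using hj0.ne')] at h
  exact h

lemma pos_expand {j : ℕ} (hj : j < m) (hj0 : 0 < j) (k : ℕ) :
    (φ^k) (FreeGroup.of (⟨j, hj⟩ : Fin m)) =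
      FreeGroup.of ⟨j, hj⟩ *
        ((List.range k).map (fun l => (φ^l) (FreeGroup.of (⟨j - 1, by omega⟩ : Fin m)))).prod := by
  induction k with
  | zero => simp
  | succ k ih =>
    rw [pow_succ, MulAut.mul_apply, hydra_step hφ hj hj0, _root_.map_mul (φ^k), ih,
      List.range_succ, List.map_append, List.prod_append]
    simp [mul_assoc]

lemma pos_struct : ∀ (j : ℕ) (hj : j < m) (k : ℕ),
    ∃ t : List (Fin m × Bool),
      ((φ^k) (FreeGroup.of (⟨j, hj⟩ : Fin m))).toWord = (⟨j, hj⟩, true) :: t ∧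
      (∀ x ∈ t, x.2 = true ∧ x.1.val < j) ∧
      (∀ _ : 0 < j,
        t = (List.range k).flatMap
          (fun l => ((φ^l) (FreeGroup.of (⟨j - 1, by omega⟩ : Fin m))).toWord)) := by
  intro j
  induction j with
  | zero =>
    intro hj k
    refine ⟨[], ?_, by simp, by omega⟩
    rw [hydra_fix_zero hφ hj k, toWord_of]
  | succ j ihj =>
    intro hj k
    have hjm : j < m := by omega
    set b : Fin m := ⟨j, hjm⟩ with hb
    set W : List (Fin m × Bool) :=
      (⟨j+1, hj⟩, true) :: (List.range k).flatMap (fun l => ((φ^l) (FreeGroup.of b)).toWord)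
      with hW
    have hletters : ∀ x ∈ W, x.2 = true ∧ x.1.val ≤ j + 1 := by
      intro x hx
      rw [hW, List.mem_cons] at hx
      rcases hx with rfl | hx
      · exact ⟨rfl, le_refl _⟩
      · rw [List.mem_flatMap] at hx
        obtain ⟨l, _, hxl⟩ := hx
        obtain ⟨t, ht, hprops, _⟩ := ihj hjm l
        rw [ht, List.mem_cons] at hxl
        rcases hxl with rfl | hxl
        · exact ⟨rfl, by simp [hb]⟩
        · exact ⟨(hprops x hxl).1, by have := (hprops x hxl).2; omega⟩
    have hchain : List.Chain' NoCan W := by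
      rw [List.Chain', List.isChain_iff_getElem]
      intro i hi
      intro hcon
      have h1 := (hletters _ (List.getElem_mem (by omega : i < W.length))).1
      have h2 := (hletters _ (List.getElem_mem (by omega : i + 1 < W.length))).1
      rw [h1, h2] at hcon
      simp at hcon
    have hmk : FreeGroup.mk W = (φ^k) (FreeGroup.of (⟨j+1, hj⟩ : Fin m)) := by
      rw [pos_expand hφ hj (by omega)]
      have : FreeGroup.mk W = FreeGroup.of (⟨j+1, hj⟩ : Fin m) *
          FreeGroup.mk ((List.range k).flatMap (fun l => ((φ^l) (FreeGroup.of b)).toWord)) := by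
        exact (FreeGroup.mul_mk (L₁ := [((⟨j+1, hj⟩ : Fin m), true)])).symm
      rw [this, List.flatMap_def, mk_flatten, List.map_map]
      congr 2
      refine List.map_congr_left (fun l _ => ?_)
      simp [mk_toWord, hb]
    have hto : ((φ^k) (FreeGroup.of (⟨j+1, hj⟩ : Fin m))).toWord = W := by
      rw [← hmk, toWord_mk, reduce_eq_self_of_chain' hchain]
    refine ⟨_, hto, ?_, fun _ => rfl⟩
    intro x hx
    have := hletters x (by rw [hW]; exact List.mem_cons_of_mem _ hx)
    refine ⟨this.1, ?_⟩
    -- x ∈ flatMap: index < j+1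
    rw [List.mem_flatMap] at hx
    obtain ⟨l, _, hxl⟩ := hx
    obtain ⟨t, ht, hprops, _⟩ := ihj hjm l
    rw [ht, List.mem_cons] at hxl
    rcases hxl with rfl | hxl
    · simp [hb]
    · have := (hprops x hxl).2; omega

lemma neg_base {j : ℕ} (hj : j < m) (hj0 : 0 < j) :
    φ⁻¹ (FreeGroup.of (⟨j, hj⟩ : Fin m)) =
      FreeGroup.of ⟨j, hj⟩ * (φ⁻¹ (FreeGroup.of (⟨j - 1, by omega⟩ : Fin m)))⁻¹ := by
  rw [MulAut.inv_def, MulEquiv.symm_apply_eq, _root_.map_mul φ, _root_.map_inv φ,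
    MulEquiv.apply_symm_apply, hydra_step hφ hj hj0]
  group

lemma neg_expand {j : ℕ} (hj : j < m) (hj0 : 0 < j) (k : ℕ) :
    ((φ^k)⁻¹) (FreeGroup.of (⟨j, hj⟩ : Fin m)) = FreeGroup.of ⟨j, hj⟩ *
      ((List.range k).map
        (fun l => (((φ^(l+1))⁻¹) (FreeGroup.of (⟨j - 1, by omega⟩ : Fin m)))⁻¹)).prod := by
  induction k with
  | zero => simp
  | succ k ih =>
    have hsplit : ∀ x, ((φ^(k+1))⁻¹) x = ((φ^k)⁻¹) (φ⁻¹ x) := by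
      intro x; rw [pow_succ', mul_inv_rev, MulAut.mul_apply]
    rw [hsplit, neg_base hφ hj hj0, _root_.map_mul ((φ^k)⁻¹), _root_.map_inv ((φ^k)⁻¹), ← hsplit, ih,
      List.range_succ, List.map_append, List.prod_append]
    simp [mul_assoc]

lemma neg_struct : ∀ (j : ℕ) (hj : j < m) (k : ℕ),
    ∃ t : List (Fin m × Bool),
      (((φ^k)⁻¹) (FreeGroup.of (⟨j, hj⟩ : Fin m))).toWord = (⟨j, hj⟩, true) :: t ∧
      (∀ x ∈ t, x.1.val < j) ∧
      (j = 0 → t = []) ∧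
      ∀ _ : 0 < j,
        t = (List.range k).flatMap
          (fun l => invRev ((((φ^(l+1))⁻¹) (FreeGroup.of (⟨j - 1, by omega⟩ : Fin m))).toWord)) ∧
        (1 ≤ k → t.getLast? = some ((⟨j - 1, by omega⟩ : Fin m), false)) := by
  intro j
  induction j with
  | zero =>
    intro hj k
    refine ⟨[], ?_, by simp, fun _ => rfl, by omega⟩
    have hfix : ((φ^k)⁻¹) (FreeGroup.of (⟨0, hj⟩ : Fin m)) = FreeGroup.of ⟨0, hj⟩ := by
      have h := hydra_fix_zero hφ hj k
      calc ((φ^k)⁻¹) (FreeGroup.of (⟨0, hj⟩ : Fin m))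
          = ((φ^k)⁻¹) ((φ^k) (FreeGroup.of ⟨0, hj⟩)) := by rw [h]
        _ = FreeGroup.of ⟨0, hj⟩ := by rw [← MulAut.mul_apply, inv_mul_cancel, MulAut.one_apply]
    rw [hfix, toWord_of]
  | succ j ihj =>
    intro hj k
    have hjm : j < m := by omega
    set b : Fin m := ⟨j, hjm⟩ with hbdef
    set B : ℕ → List (Fin m × Bool) :=
      fun l => invRev ((((φ^(l+1))⁻¹) (FreeGroup.of b)).toWord) with hB
    have hblock : ∀ l, ∃ t_l, (((φ^(l+1))⁻¹) (FreeGroup.of b)).toWord = (b, true) :: t_l ∧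
        (∀ x ∈ t_l, x.1.val < j) ∧ (j = 0 → t_l = []) ∧
        (0 < j → t_l.getLast? = some ((⟨j - 1, by omega⟩ : Fin m), false)) := by
      intro l
      obtain ⟨t_l, h1, h2, h3, h4⟩ := ihj hjm (l+1)
      exact ⟨t_l, h1, h2, h3, fun hj0 => (h4 hj0).2 (by omega)⟩
    -- basic properties of blocks
    have hBmem : ∀ l, ∀ x ∈ B l, x.1.val ≤ j := by
      intro l x hx
      obtain ⟨t_l, h1, h2, _, _⟩ := hblock l
      rw [hB] at hx
      simp only [h1, invRev, List.map_cons, List.reverse_cons, List.mem_append,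
        List.mem_reverse, List.mem_map, List.mem_singleton] at hx
      rcases hx with ⟨a, ha, rfl⟩ | rfl
      · exact le_of_lt (h2 a ha)
      · simp [hbdef]
    have hBlast : ∀ l, (B l).getLast? = some (b, false) := by
      intro l
      obtain ⟨t_l, h1, _, _, _⟩ := hblock l
      rw [hB]
      simp only [h1, invRev, List.map_cons, List.reverse_cons]
      exact List.getLast?_concat
    have hBchain : ∀ l, List.Chain' NoCan (B l) := by
      intro l
      have : B l = ((((φ^(l+1))⁻¹) (FreeGroup.of b))⁻¹).toWord := by
        rw [hB, toWord_inv]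
      rw [this]
      exact chain'_of_reduce_eq (reduce_toWord _)
    have hBhead : ∀ l, ∀ y ∈ (B l).head?, y = (b, false) ∨ (y.1.val < j ∧ y.2 = true) := by
      intro l y hy
      obtain ⟨t_l, h1, h2, h3, h4⟩ := hblock l
      rw [hB] at hy
      simp only [h1, invRev, List.map_cons, List.reverse_cons] at hy
      rcases List.eq_nil_or_concat t_l with rfl | ⟨t', z, rfl⟩
      · left
        exact ((by simpa using hy) : (b, false) = y).symm
      · right
        simp only [List.concat_eq_append] at h1 h2 h3 h4 hy
        have hj0 : 0 < j := by
          by_contra hcon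
          have := h3 (by omega)
          simp at this
        have hlast := h4 hj0
        rw [List.getLast?_concat] at hlast
        obtain rfl : z = ((⟨j - 1, by omega⟩ : Fin m), false) := by injection hlast
        rw [List.head?_append] at hy
        have : ((t' ++ [((⟨j - 1, by omega⟩ : Fin m), false)]).map
            (fun x : Fin m × Bool => (x.1, !x.2))).reverse.head? =
            some ((⟨j - 1, by omega⟩ : Fin m), true) := by
          rw [List.head?_reverse, List.getLast?_map, List.getLast?_concat]
          rfl
        rw [this] at hy
        simp only [Option.some_or] at hy  -- hy : some _ = some y? check
        obtain rfl : y = ((⟨j - 1, by omega⟩ : Fin m), true) := by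
          simpa using hy.symm
        exact ⟨by simp; omega, rfl⟩
    set W : List (Fin m × Bool) := (⟨j+1, hj⟩, true) :: (List.range k).flatMap B with hW
    have hflat : (List.range k).flatMap B = ((List.range k).map B).flatten :=
      List.flatMap_def
    have hchainflat : List.Chain' NoCan (((List.range k).map B).flatten) := by
      apply chain'_flatten_of
      · rintro Bl hBl
        rw [List.mem_map] at hBl
        obtain ⟨l, _, rfl⟩ := hBl
        exact hBchain l
      · rintro B1 hB1 B2 hB2 x hx y hy
        rw [List.mem_map] at hB1 hB2
        obtain ⟨l1, _, rfl⟩ := hB1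
        obtain ⟨l2, _, rfl⟩ := hB2
        have hxlast : x = (b, false) := by
          rw [hBlast l1] at hx
          exact ((by simpa using hx) : (b, false) = x).symm
        rcases hBhead l2 y hy with rfl | ⟨hylt, hytrue⟩
        · rintro ⟨_, hcon⟩
          rw [hxlast] at hcon
          simp at hcon
        · rintro ⟨hcon, _⟩
          rw [hxlast] at hcon
          have := congrArg Fin.val hcon
          simp [hbdef] at this
          omega
    have hchainW : List.Chain' NoCan W := by
      rw [hW, hflat, List.Chain', List.isChain_cons]
      refine ⟨?_, hchainflat⟩
      intro y hy
      have hymem : y ∈ ((List.range k).map B).flatten := List.mem_of_mem_head? hy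
      rw [List.mem_flatten] at hymem
      obtain ⟨Bl, hBl, hyBl⟩ := hymem
      rw [List.mem_map] at hBl
      obtain ⟨l, _, rfl⟩ := hBl
      have hle : y.1.val ≤ j := hBmem l y hyBl
      rintro ⟨hcon, _⟩
      have := congrArg Fin.val hcon
      simp at this
      omega
    have hmkW : FreeGroup.mk W = ((φ^k)⁻¹) (FreeGroup.of (⟨j+1, hj⟩ : Fin m)) := by
      rw [neg_expand hφ hj (by omega)]
      have h1 : FreeGroup.mk W = FreeGroup.of (⟨j+1, hj⟩ : Fin m) *
          FreeGroup.mk (((List.range k).map B).flatten) := by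
        rw [hW, hflat]
        exact (FreeGroup.mul_mk (L₁ := [((⟨j+1, hj⟩ : Fin m), true)])).symm
      rw [h1, mk_flatten, List.map_map]
      congr 2
      refine List.map_congr_left (fun l _ => ?_)
      show FreeGroup.mk (B l) = (((φ^(l+1))⁻¹) (FreeGroup.of (⟨j+1-1, by omega⟩ : Fin m)))⁻¹
      rw [hB]
      show FreeGroup.mk (invRev ((((φ^(l+1))⁻¹) (FreeGroup.of b)).toWord)) = _
      rw [← FreeGroup.inv_mk, mk_toWord]
      rfl
    have htoW : (((φ^k)⁻¹) (FreeGroup.of (⟨j+1, hj⟩ : Fin m))).toWord = W := by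
      rw [← hmkW, toWord_mk, reduce_eq_self_of_chain' hchainW]
    refine ⟨(List.range k).flatMap B, htoW, ?_, by omega, fun _ => ⟨rfl, ?_⟩⟩
    · intro x hx
      rw [List.mem_flatMap] at hx
      obtain ⟨l, _, hxl⟩ := hx
      have := hBmem l x hxl
      omega
    · intro hk
      obtain ⟨k', rfl⟩ : ∃ k', k = k' + 1 := ⟨k-1, by omega⟩
      rw [List.range_succ, List.flatMap_append, List.getLast?_append]
      have : ([k'].flatMap B).getLast? = some (b, false) := by
        simp only [List.flatMap_cons, List.flatMap_nil, List.append_nil]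
        exact hBlast k'
      rw [this]
      rfl


end

/-- Lemma 4.3: for `2 ≤ i ≤ m`,
`φ^r(aᵢ) = aᵢ aᵢ₋₁ φ(aᵢ₋₁) ⋯ φ^{r-1}(aᵢ₋₁)` for `r > 0` and
`φ^r(aᵢ) = aᵢ φ⁻¹(aᵢ₋₁)⁻¹ φ⁻²(aᵢ₋₁)⁻¹ ⋯ φ^{r}(aᵢ₋₁)⁻¹` for `r < 0`,
and these expressions are freely reduced words. -/
theorem stmt_9 (m : ℕ) (hm : 2 ≤ m)
    (φ : FreeGroup (Fin m) ≃* FreeGroup (Fin m)) (hφ : IsHydraAut m φ)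
    (i : ℕ) (hi : 2 ≤ i) (him : i ≤ m) :
    (∀ r : ℕ, 0 < r →
      Reduced (((⟨i - 1, by omega⟩ : Fin m), true) ::
          (List.range r).flatMap (fun k =>
            FreeGroup.toWord ((φ ^ (k : ℤ)) (FreeGroup.of (⟨i - 2, by omega⟩ : Fin m)))) :
        FWord m) ∧
      FreeGroup.mk (((⟨i - 1, by omega⟩ : Fin m), true) ::
          (List.range r).flatMap (fun k =>
            FreeGroup.toWord ((φ ^ (k : ℤ)) (FreeGroup.of (⟨i - 2, by omega⟩ : Fin m))))) =
        (φ ^ (r : ℤ)) (FreeGroup.of (⟨i - 1, by omega⟩ : Fin m))) ∧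
    (∀ r : ℕ, 0 < r →
      Reduced (((⟨i - 1, by omega⟩ : Fin m), true) ::
          (List.range r).flatMap (fun k =>
            FreeGroup.toWord (((φ ^ (-(k : ℤ) - 1))
              (FreeGroup.of (⟨i - 2, by omega⟩ : Fin m)))⁻¹)) : FWord m) ∧
      FreeGroup.mk (((⟨i - 1, by omega⟩ : Fin m), true) ::
          (List.range r).flatMap (fun k =>
            FreeGroup.toWord (((φ ^ (-(k : ℤ) - 1))
              (FreeGroup.of (⟨i - 2, by omega⟩ : Fin m)))⁻¹))) =
        (φ ^ (-(r : ℤ))) (FreeGroup.of (⟨i - 1, by omega⟩ : Fin m))) := by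
  have him1 : i - 1 < m := by omega
  have hconv : ∀ k : ℕ, φ ^ (-(k : ℤ) - 1) = (φ ^ (k + 1))⁻¹ := by
    intro k
    rw [show -(k : ℤ) - 1 = -((k + 1 : ℕ) : ℤ) by push_cast; ring, zpow_neg, zpow_natCast]
  constructor
  · intro r hr
    obtain ⟨t, hto, hprops, hform⟩ := pos_struct hφ (i - 1) him1 r
    have h3 := hform (by omega)
    have hW : (((⟨i - 1, him1⟩ : Fin m), true) ::
        (List.range r).flatMap (fun k =>
          FreeGroup.toWord ((φ ^ (k : ℤ)) (FreeGroup.of (⟨i - 2, by omega⟩ : Fin m))))) =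
        ((φ ^ r) (FreeGroup.of (⟨i - 1, him1⟩ : Fin m))).toWord := by
      rw [hto, h3]
      congr 1
      simp [List.flatMap_assoc]
      rfl
    constructor
    · show FreeGroup.reduce _ = _
      rw [hW]
      exact reduce_toWord _
    · rw [hW, mk_toWord, zpow_natCast]
  · intro r hr
    obtain ⟨t, hto, hprops, _, hform⟩ := neg_struct hφ (i - 1) him1 r
    have h3 := (hform (by omega)).1
    have hW : (((⟨i - 1, him1⟩ : Fin m), true) ::
        (List.range r).flatMap (fun k =>
          FreeGroup.toWord (((φ ^ (-(k : ℤ) - 1))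
            (FreeGroup.of (⟨i - 2, by omega⟩ : Fin m)))⁻¹))) =
        (((φ ^ r)⁻¹) (FreeGroup.of (⟨i - 1, him1⟩ : Fin m))).toWord := by
      simp only [hconv, toWord_inv]
      rw [hto, h3]
      congr 1
      simp [List.flatMap_assoc, hconv]
      rfl
    constructor
    · show FreeGroup.reduce _ = _
      rw [hW]
      exact reduce_toWord _
    · rw [hW, mk_toWord, zpow_neg, zpow_natCast]
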